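/- Let M be a diamond, f : M^n → ℝ strictly submodular, and x a vertex of P_M(f). Then the set of x-tight tuples forms a chain in M^n (any two x-tight tuples are comparable). -/

import Mathlib

set_option linter.unreachableTactic false
set_option linter.unusedTactic false
set_option linter.unusedVariables false

inductive Dia (A : Type) : Type where
  | bot : Dia A
  | atom : A → Dia A
  | top : Dia A
  deriving DecidableEq

namespace Dia

variable {A : Type} [DecidableEq A]

instance : Lattice (Dia A) where
  le x y := x = bot ∨ y = top ∨ x = y
  le_refl x := Or.inr (Or.inr rfl)
  le_trans x y z hxy hyz := by
    rcases hxy with h | h | h <;> rcases hyz with h' | h' | h' <;> simp_all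
  le_antisymm x y hxy hyx := by
    rcases hxy with h | h | h <;> rcases hyx with h' | h' | h' <;> simp_all
  sup x y := if x = bot then y else if y = bot then x else if x = y then x else top
  inf x y := if x = top then y else if y = top then x else if x = y then x else bot
  le_sup_left x y := by
    try dsimp only
    split_ifs <;> (try simp_all) <;> (try split_ifs) <;> (try simp_all)
  le_sup_right x y := by
    try dsimp only
    split_ifs <;> (try simp_all) <;> (try split_ifs) <;> (try simp_all)
  sup_le x y z hxz hyz := by
    try dsimp only
    rcases hxz with h | h | h <;> rcases hyz with h' | h' | h' <;> split_ifs <;> (try simp_all) <;> (try split_ifs) <;> (try simp_all)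
  inf_le_left x y := by
    try dsimp only
    split_ifs <;> (try simp_all) <;> (try split_ifs) <;> (try simp_all)
  inf_le_right x y := by
    try dsimp only
    split_ifs <;> (try simp_all) <;> (try split_ifs) <;> (try simp_all)
  le_inf x y z hxy hxz := by
    try dsimp only
    rcases hxy with h | h | h <;> rcases hxz with h' | h' | h' <;> split_ifs <;> (try simp_all) <;> (try split_ifs) <;> (try simp_all)

instance : BoundedOrder (Dia A) where
  top := top
  bot := bot
  le_top x := Or.inr (Or.inl rfl)
  bot_le x := Or.inl rfl

def drank : Dia A → ℕ
  | bot => 0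
  | atom _ => 1
  | top => 2

noncomputable def gval (v : A → ℝ) : Dia A → ℝ
  | bot => 0
  | atom a => v a
  | top => sSup {r : ℝ | ∃ a a' : A, a ≠ a' ∧ r = v a + v a'}

end Dia

variable {A : Type} [DecidableEq A] {n : ℕ}

noncomputable def evalD (x : Fin n → A → ℝ) (y : Fin n → Dia A) : ℝ :=
  ∑ i, Dia.gval (x i) (y i)

def Submod (f : (Fin n → Dia A) → ℝ) : Prop :=
  ∀ a b, f (a ⊓ b) + f (a ⊔ b) ≤ f a + f b

def InP (f : (Fin n → Dia A) → ℝ) (x : Fin n → A → ℝ) : Prop :=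
  ∀ y, evalD x y ≤ f y

def UnifiedRow (v : A → ℝ) : Prop :=
  ∃ p : A, (∀ a b : A, a ≠ p → b ≠ p → v a = v b) ∧ ∀ a, v a ≤ v p

def Unified (x : Fin n → A → ℝ) : Prop := ∀ i, UnifiedRow (x i)



lemma gval_supermod {A : Type} [DecidableEq A] [Fintype A] (v : A → ℝ) (a b : Dia A) :
    Dia.gval v a + Dia.gval v b ≤ Dia.gval v (a ⊓ b) + Dia.gval v (a ⊔ b) := by
  by_cases hab : a ≤ b
  · rw [inf_eq_left.2 hab, sup_eq_right.2 hab]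
  by_cases hba : b ≤ a
  · rw [inf_eq_right.2 hba, sup_eq_left.2 hba]; ring_nf; rfl
  -- incomparable: both atoms, distinct
  have hle : ∀ x y : Dia A, (x ≤ y) = (x = Dia.bot ∨ y = Dia.top ∨ x = y) := fun _ _ => rfl
  rw [hle] at hab hba
  push_neg at hab hba
  obtain ⟨ha1, ha2, ha3⟩ := hab
  obtain ⟨hb1, hb2, hb3⟩ := hba
  obtain ⟨p, rfl⟩ : ∃ p, a = Dia.atom p := by
    cases a with
    | bot => exact absurd rfl ha1
    | top => exact absurd rfl hb2
    | atom p => exact ⟨p, rfl⟩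
  obtain ⟨q, rfl⟩ : ∃ q, b = Dia.atom q := by
    cases b with
    | bot => exact absurd rfl hb1
    | top => exact absurd rfl ha2
    | atom q => exact ⟨q, rfl⟩
  have hpq : p ≠ q := fun h => ha3 (by rw [h])
  have hinf : (Dia.atom p : Dia A) ⊓ Dia.atom q = Dia.bot := by
    show (if _ then _ else _) = _
    simp [hpq]
  have hsup : (Dia.atom p : Dia A) ⊔ Dia.atom q = Dia.top := by
    show (if _ then _ else _) = _
    simp [hpq]
  rw [hinf, hsup]
  have hbdd : BddAbove {r : ℝ | ∃ a a' : A, a ≠ a' ∧ r = v a + v a'} := by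
    apply Set.Finite.bddAbove
    apply (Set.finite_range (fun pr : A × A => v pr.1 + v pr.2)).subset
    rintro r ⟨a, a', _, rfl⟩
    exact ⟨(a, a'), rfl⟩
  have := le_csSup hbdd ⟨p, q, hpq, rfl⟩
  simp only [Dia.gval]
  linarith

lemma evalD_supermod {A : Type} [DecidableEq A] [Fintype A] {n : ℕ}
    (x : Fin n → A → ℝ) (t u : Fin n → Dia A) :
    evalD x t + evalD x u ≤ evalD x (t ⊓ u) + evalD x (t ⊔ u) := by
  unfold evalD
  rw [← Finset.sum_add_distrib, ← Finset.sum_add_distrib]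
  apply Finset.sum_le_sum
  intro i _
  exact gval_supermod (x i) (t i) (u i)

/-- for strictly submodular f, the x-tight tuples of a vertex x of
P_M(f) form a chain. -/
theorem stmt13 [Fintype A] (hA : 3 ≤ Fintype.card A)
    (f : (Fin n → Dia A) → ℝ)
    (hstrict : ∀ t u : Fin n → Dia A, ¬ t ≤ u → ¬ u ≤ t →
      f (t ⊓ u) + f (t ⊔ u) < f t + f u)
    (x : Fin n → A → ℝ) (hx : InP f x)
    (hvertex : ∃ c : Fin n → A → ℝ, ∀ y : Fin n → A → ℝ, InP f y → y ≠ x →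
      (∑ i, ∑ a, c i a * y i a) < ∑ i, ∑ a, c i a * x i a)
    (t u : Fin n → Dia A) (ht : evalD x t = f t) (hu : evalD x u = f u) :
    t ≤ u ∨ u ≤ t := by
  by_contra h
  rw [not_or] at h
  have hs := hstrict t u h.1 h.2
  have h1 := hx (t ⊓ u)
  have h2 := hx (t ⊔ u)
  have h3 := evalD_supermod x t u
  clear h
  linarith
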